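/- Let H, K₁, K₂ be finite-dimensional Hilbert spaces, U ∈ B(H) ⊗ B(K₁) and V ∈ B(H) ⊗ B(K₂) unitaries, and M a state on B(K₁ ⊗ K₂) = B(K₁) ⊗ B(K₂) satisfying M((ω ⊗ ι ⊗ ι)((U×V)* (1 ⊗ x)(U×V))) = ω(1) M(x) for all x ∈ B(K₁ ⊗ K₂) and all linear functionals ω on B(H), where U×V := V₁₃ U₁₂. Then m(y) := M(y ⊗ 1_{K₂}) defines a state on B(K₁) satisfying m((ω ⊗ ι)(U*(1 ⊗ y)U)) = ω(1) m(y) for all y ∈ B(K₁) and all ω; i.e. if the tensor product corepresentation U×V is left-amenable, then U is left-amenable. -/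

import Mathlib

open Kronecker
open scoped ComplexOrder

private lemma kron_conjTranspose' {p q r s : Type*} (A : Matrix p q ℂ) (B : Matrix r s ℂ) :
    (A ⊗ₖ B).conjTranspose = A.conjTranspose ⊗ₖ B.conjTranspose := by
  ext ⟨i, k⟩ ⟨j, l⟩
  simp [Matrix.conjTranspose_apply, mul_comm]

/-- If `M` is a left-invariant mean (a state) for the tensor product
corepresentation `U×V := V₁₃ U₁₂` of two unitaries `U = Σ a_p ⊗ b_p` and
`V = Σ c_q ⊗ d_q` (finite dimensions), then `m(y) := M(y ⊗ 1)` is a left-invariant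
mean (a state) for `U`; i.e. if `U×V` is left-amenable then `U` is left-amenable. -/
theorem tensor_left_amenable_implies_left_amenable
    (m n₁ n₂ : ℕ) (ι κ : Type) [Fintype ι] [Fintype κ]
    (a : ι → Matrix (Fin m) (Fin m) ℂ) (b : ι → Matrix (Fin n₁) (Fin n₁) ℂ)
    (c : κ → Matrix (Fin m) (Fin m) ℂ) (d : κ → Matrix (Fin n₂) (Fin n₂) ℂ)
    (hU₁ : star (∑ p, a p ⊗ₖ b p) * (∑ p, a p ⊗ₖ b p) = 1)
    (hU₂ : (∑ p, a p ⊗ₖ b p) * star (∑ p, a p ⊗ₖ b p) = 1)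
    (hV₁ : star (∑ q, c q ⊗ₖ d q) * (∑ q, c q ⊗ₖ d q) = 1)
    (hV₂ : (∑ q, c q ⊗ₖ d q) * star (∑ q, c q ⊗ₖ d q) = 1)
    (M : Matrix (Fin n₁ × Fin n₂) (Fin n₁ × Fin n₂) ℂ →ₗ[ℂ] ℂ)
    (hMpos : ∀ X, 0 ≤ M (star X * X))
    (hMone : M 1 = 1)
    (hMinv : ∀ (x : Matrix (Fin n₁ × Fin n₂) (Fin n₁ × Fin n₂) ℂ)
        (ω : Matrix (Fin m) (Fin m) ℂ →ₗ[ℂ] ℂ),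
      M (Matrix.of fun k l =>
        ω (Matrix.of fun i j =>
          (star ((∑ q, c q ⊗ₖ ((1 : Matrix (Fin n₁) (Fin n₁) ℂ) ⊗ₖ d q)) *
                (∑ p, a p ⊗ₖ (b p ⊗ₖ (1 : Matrix (Fin n₂) (Fin n₂) ℂ)))) *
            ((1 : Matrix (Fin m) (Fin m) ℂ) ⊗ₖ x) *
            ((∑ q, c q ⊗ₖ ((1 : Matrix (Fin n₁) (Fin n₁) ℂ) ⊗ₖ d q)) *
              (∑ p, a p ⊗ₖ (b p ⊗ₖ (1 : Matrix (Fin n₂) (Fin n₂) ℂ)))))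
            (i, k) (j, l))) = ω 1 * M x) :
    (∀ y : Matrix (Fin n₁) (Fin n₁) ℂ,
      0 ≤ M ((star y * y) ⊗ₖ (1 : Matrix (Fin n₂) (Fin n₂) ℂ))) ∧
    M ((1 : Matrix (Fin n₁) (Fin n₁) ℂ) ⊗ₖ (1 : Matrix (Fin n₂) (Fin n₂) ℂ)) = 1 ∧
    (∀ (y : Matrix (Fin n₁) (Fin n₁) ℂ) (ω : Matrix (Fin m) (Fin m) ℂ →ₗ[ℂ] ℂ),
      M ((Matrix.of fun k l =>
          ω (Matrix.of fun i j =>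
            (star (∑ p, a p ⊗ₖ b p) *
              ((1 : Matrix (Fin m) (Fin m) ℂ) ⊗ₖ y) *
              (∑ p, a p ⊗ₖ b p)) (i, k) (j, l))) ⊗ₖ
          (1 : Matrix (Fin n₂) (Fin n₂) ℂ)) =
        ω 1 * M (y ⊗ₖ (1 : Matrix (Fin n₂) (Fin n₂) ℂ))) := by
  classical
  refine ⟨?_, ?_, ?_⟩
  · intro y
    have h : star (y ⊗ₖ (1 : Matrix (Fin n₂) (Fin n₂) ℂ)) * (y ⊗ₖ 1)
        = (star y * y) ⊗ₖ (1 : Matrix (Fin n₂) (Fin n₂) ℂ) := by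
      rw [Matrix.star_eq_conjTranspose, kron_conjTranspose', Matrix.conjTranspose_one,
        ← Matrix.mul_kronecker_mul, one_mul, ← Matrix.star_eq_conjTranspose]
    rw [← h]
    exact hMpos _
  · rw [Matrix.one_kronecker_one]; exact hMone
  · intro y ω
    set e1 : (Fin m × Fin n₁) × Fin n₂ ≃ Fin m × (Fin n₁ × Fin n₂) :=
      Equiv.prodAssoc (Fin m) (Fin n₁) (Fin n₂) with he1
    set e2 : (Fin m × Fin n₂) × Fin n₁ ≃ Fin m × (Fin n₁ × Fin n₂) :=
      (Equiv.prodAssoc (Fin m) (Fin n₂) (Fin n₁)).trans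
        ((Equiv.refl (Fin m)).prodCongr (Equiv.prodComm (Fin n₂) (Fin n₁))) with he2
    set U : Matrix (Fin m × Fin n₁) (Fin m × Fin n₁) ℂ := ∑ p, a p ⊗ₖ b p with hUdef
    set V : Matrix (Fin m × Fin n₂) (Fin m × Fin n₂) ℂ := ∑ q, c q ⊗ₖ d q with hVdef
    set V13 : Matrix (Fin m × (Fin n₁ × Fin n₂)) (Fin m × (Fin n₁ × Fin n₂)) ℂ :=
      ∑ q, c q ⊗ₖ ((1 : Matrix (Fin n₁) (Fin n₁) ℂ) ⊗ₖ d q) with hV13def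
    set U12 : Matrix (Fin m × (Fin n₁ × Fin n₂)) (Fin m × (Fin n₁ × Fin n₂)) ℂ :=
      ∑ p, a p ⊗ₖ (b p ⊗ₖ (1 : Matrix (Fin n₂) (Fin n₂) ℂ)) with hU12def
    set T : Matrix (Fin m × (Fin n₁ × Fin n₂)) (Fin m × (Fin n₁ × Fin n₂)) ℂ :=
      (1 : Matrix (Fin m) (Fin m) ℂ) ⊗ₖ (y ⊗ₖ (1 : Matrix (Fin n₂) (Fin n₂) ℂ)) with hTdef
    -- V13 is a reindexing of V ⊗ 1
    have hV13eq : V13 = Matrix.reindex e2 e2 (V ⊗ₖ (1 : Matrix (Fin n₁) (Fin n₁) ℂ)) := by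
      rw [hV13def, hVdef, he2]
      ext ⟨i, k₁, k₂⟩ ⟨j, l₁, l₂⟩
      simp only [Matrix.sum_apply, Matrix.kroneckerMap_apply, Matrix.reindex_apply,
        Matrix.submatrix_apply, Equiv.symm_trans_apply, Equiv.prodCongr_symm,
        Equiv.prodCongr_apply, Equiv.refl_symm, Equiv.refl_apply, Equiv.prodComm_symm,
        Equiv.prodComm_apply, Prod.map, Equiv.prodAssoc_symm_apply, Prod.swap_prod_mk,
        Finset.sum_mul]
      exact Finset.sum_congr rfl fun _ _ => by ring
    -- U12 is a reindexing of U ⊗ 1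
    have hU12eq : U12 = Matrix.reindex e1 e1 (U ⊗ₖ (1 : Matrix (Fin n₂) (Fin n₂) ℂ)) := by
      rw [hU12def, hUdef, he1]
      ext ⟨i, k₁, k₂⟩ ⟨j, l₁, l₂⟩
      simp only [Matrix.sum_apply, Matrix.kroneckerMap_apply, Matrix.reindex_apply,
        Matrix.submatrix_apply, Equiv.prodAssoc_symm_apply, Finset.sum_mul]
      exact Finset.sum_congr rfl fun _ _ => by ring
    -- T is a reindexing of (1 ⊗ y) ⊗ 1
    have hTeq : T = Matrix.reindex e1 e1
        (((1 : Matrix (Fin m) (Fin m) ℂ) ⊗ₖ y) ⊗ₖ (1 : Matrix (Fin n₂) (Fin n₂) ℂ)) := by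
      rw [hTdef, he1]
      ext ⟨i, k₁, k₂⟩ ⟨j, l₁, l₂⟩
      simp only [Matrix.kroneckerMap_apply, Matrix.reindex_apply, Matrix.submatrix_apply,
        Equiv.prodAssoc_symm_apply]
      ring
    -- star V13 * V13 = 1
    have hV13unit : star V13 * V13 = 1 := by
      have h2 := map_mul (Matrix.reindexAlgEquiv ℂ ℂ e2)
        ((star V) ⊗ₖ (1 : Matrix (Fin n₁) (Fin n₁) ℂ)) (V ⊗ₖ 1)
      simp only [Matrix.reindexAlgEquiv_apply] at h2
      rw [hV13eq, Matrix.star_eq_conjTranspose, Matrix.conjTranspose_reindex,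
        kron_conjTranspose', Matrix.conjTranspose_one, ← Matrix.star_eq_conjTranspose, ← h2,
        ← Matrix.mul_kronecker_mul, hV₁, one_mul, Matrix.one_kronecker_one]
      exact (Matrix.reindexAlgEquiv ℂ ℂ e2).map_one
    -- T commutes with V13
    have hcomm : T * V13 = V13 * T := by
      rw [hTdef, hV13def, Finset.mul_sum, Finset.sum_mul]
      refine Finset.sum_congr rfl fun q _ => ?_
      simp only [← Matrix.mul_kronecker_mul, one_mul, mul_one]
    -- kill V13
    have hW : star (V13 * U12) * T * (V13 * U12) = star U12 * T * U12 := by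
      rw [star_mul]
      have h3 : star V13 * (T * V13) = T := by rw [hcomm, ← mul_assoc, hV13unit, one_mul]
      calc star U12 * star V13 * T * (V13 * U12)
          = star U12 * (star V13 * (T * V13)) * U12 := by simp only [mul_assoc]
        _ = star U12 * T * U12 := by rw [h3]
    -- the key identity
    have hKey : star (V13 * U12) * T * (V13 * U12) =
        Matrix.reindex e1 e1
          ((star U * ((1 : Matrix (Fin m) (Fin m) ℂ) ⊗ₖ y) * U) ⊗ₖ
            (1 : Matrix (Fin n₂) (Fin n₂) ℂ)) := by
      rw [hW, hU12eq, hTeq]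
      have h4 := map_mul (Matrix.reindexAlgEquiv ℂ ℂ e1)
        ((star U) ⊗ₖ (1 : Matrix (Fin n₂) (Fin n₂) ℂ))
        ((((1 : Matrix (Fin m) (Fin m) ℂ) ⊗ₖ y) ⊗ₖ (1 : Matrix (Fin n₂) (Fin n₂) ℂ)))
      have h5 := map_mul (Matrix.reindexAlgEquiv ℂ ℂ e1)
        ((star U * ((1 : Matrix (Fin m) (Fin m) ℂ) ⊗ₖ y)) ⊗ₖ (1 : Matrix (Fin n₂) (Fin n₂) ℂ))
        (U ⊗ₖ (1 : Matrix (Fin n₂) (Fin n₂) ℂ))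
      simp only [Matrix.reindexAlgEquiv_apply] at h4 h5
      rw [Matrix.star_eq_conjTranspose, Matrix.conjTranspose_reindex, kron_conjTranspose',
        Matrix.conjTranspose_one, ← Matrix.star_eq_conjTranspose, ← h4,
        ← Matrix.mul_kronecker_mul, mul_one, ← h5, ← Matrix.mul_kronecker_mul, mul_one]
    -- finish using hMinv with x = y ⊗ 1
    have hM := hMinv (y ⊗ₖ (1 : Matrix (Fin n₂) (Fin n₂) ℂ)) ω
    rw [← hTdef, hKey] at hM
    rw [← hM]
    congr 1
    ext ⟨k₁, k₂⟩ ⟨l₁, l₂⟩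
    simp only [Matrix.kroneckerMap_apply, Matrix.of_apply]
    have h6 : (Matrix.of fun i j =>
        (Matrix.reindex e1 e1
          ((star U * ((1 : Matrix (Fin m) (Fin m) ℂ) ⊗ₖ y) * U) ⊗ₖ
            (1 : Matrix (Fin n₂) (Fin n₂) ℂ))) (i, (k₁, k₂)) (j, (l₁, l₂))) =
        ((1 : Matrix (Fin n₂) (Fin n₂) ℂ) k₂ l₂) •
          (Matrix.of fun i j =>
            (star U * ((1 : Matrix (Fin m) (Fin m) ℂ) ⊗ₖ y) * U) (i, k₁) (j, l₁)) := by
      ext i j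
      simp only [Matrix.of_apply, Matrix.reindex_apply, Matrix.submatrix_apply, he1,
        Equiv.prodAssoc_symm_apply, Matrix.kroneckerMap_apply, Matrix.smul_apply,
        smul_eq_mul]
      ring
    rw [h6, map_smul, smul_eq_mul, mul_comm]
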